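/- Let σ = {B_1,…,B_k} be a non-atomic set partition of [n] with blocks in increasing order of minima, let j be the smallest element of the underlying set of R(σ), and let B_r be the first block of R(σ). Then j ≥ 2, σ_{[j-1]} = {B_1, B_2, …, B_{r-1}}, and σ_{[j,n]} = R(σ) = {B_r, B_{r+1}, …, B_k}. -/

import Mathlib

/-- A block of a set partition: a finite set of positive integers. -/
abbrev Block : Type := Finset ℕ

/-- The underlying set of a list of blocks (the union of all blocks). -/
def support (P : List Block) : Finset ℕ := P.foldr (· ∪ ·) ∅

/-- `P` is a set partition of `[n] = {1,…,n}`: a list of pairwise disjoint nonempty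
blocks with union `{1,…,n}`, listed in increasing order of their minimal elements. -/
def IsPartition (n : ℕ) (P : List Block) : Prop :=
  (∀ B ∈ P, B.Nonempty) ∧ List.Pairwise Disjoint P ∧
    support P = Finset.Icc 1 n ∧
    List.Chain' (fun B C : Block => B.min < C.min) P

/-- Add `m` to every element of every block: `σ + m`. -/
def shiftUp (m : ℕ) (P : List Block) : List Block := P.map fun B => B.image (· + m)

/-- Subtract `m` from every element of every block. -/
def shiftDown (m : ℕ) (P : List Block) : List Block := P.map fun B => B.image (· - m)

/-- The slash product `π | σ` where `π` is a partition of `[m]`. -/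
def slash (m : ℕ) (P Q : List Block) : List Block := P ++ shiftUp m Q

/-- `P` is an atomic partition of `[n]`: it is not a slash product of two
nonempty partitions. -/
def Atomic (n : ℕ) (P : List Block) : Prop :=
  ¬ ∃ (a b : ℕ) (σ τ : List Block), 0 < a ∧ 0 < b ∧ a + b = n ∧
      IsPartition a σ ∧ IsPartition b τ ∧ P = slash a σ τ

/-- The split product `π ∘ σ` where `π` is a partition of `[m]`. -/
def splitProd (m : ℕ) (P Q : List Block) : List Block :=
  List.zipWith (· ∪ ·) P (shiftUp m Q) ++ P.drop Q.length ++ (shiftUp m Q).drop P.length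

/-- `P` is a splitable partition of `[n]`: a split product of two nonempty partitions. -/
def Splitable (n : ℕ) (P : List Block) : Prop :=
  ∃ (a b : ℕ) (σ τ : List Block), 0 < a ∧ 0 < b ∧ a + b = n ∧
      IsPartition a σ ∧ IsPartition b τ ∧ P = splitProd a σ τ

/-- The minimum of a block (`0` for the empty block). -/
def blockMin (B : Block) : ℕ := B.min.untopD 0

/-- The restriction `π_S`: the nonempty intersections `B ∩ S`, listed in
increasing order of their minimal elements. -/
def restrict (P : List Block) (S : Finset ℕ) : List Block :=
  (((P.map (· ∩ S)).filter fun B => decide B.Nonempty).mergeSort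
    fun B C => decide (blockMin B ≤ blockMin C))

/-- The blocks from position `d` on have union equal to an upper part
`{x_t, x_{t+1}, …, x_n}` of the underlying set. -/
def IsUpperSuffix (P : List Block) (d : ℕ) : Prop :=
  ∃ s ∈ support P, support (P.drop d) = (support P).filter (s ≤ ·)

instance (P : List Block) : DecidablePred (IsUpperSuffix P) := fun d => by
  unfold IsUpperSuffix; infer_instance

/-- `R(π)`: the longest proper-or-improper final segment `{B_r,…,B_k}` of the blocks
whose union is an upper part `{x_t,…,x_n}` of the underlying set. -/
def Rmap (P : List Block) : List Block :=
  P.drop ((((Finset.range P.length).filter fun d => IsUpperSuffix P d).max).unbotD 0)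

/-- `π = π_{[i-1]} ∘ (π_{[i,n]} − i + 1)`. -/
def SplitsAt (n i : ℕ) (P : List Block) : Prop :=
  P = splitProd (i - 1) (restrict P (Finset.Icc 1 (i - 1)))
        (shiftDown (i - 1) (restrict P (Finset.Icc i n)))

instance (n : ℕ) (P : List Block) : DecidablePred fun i => SplitsAt n i P := fun i => by
  unfold SplitsAt; infer_instance

/-- The index `i` in the definition of `φ`: the smallest element of the first block
`B_1` such that `π = π_{[i-1]} ∘ (π_{[i,n]} − i + 1)`. -/
def phiI (n : ℕ) (P : List Block) : ℕ :=
  (((P.headD ∅).filter fun i => 2 ≤ i ∧ SplitsAt n i P).min).untopD 0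

/-- The index `j` in the definition of `φ`: the smallest element of the underlying
set of `R(π_{[i,n]})`. -/
def phiJ (n : ℕ) (P : List Block) : ℕ :=
  ((support (Rmap (restrict P (Finset.Icc (phiI n P) n)))).min).untopD 0

/-- The map `φ`: `φ(π) = π_{[j-1]} | (π_{[j,n]} − j + 1)`. -/
def phi (n : ℕ) (P : List Block) : List Block :=
  slash (phiJ n P - 1) (restrict P (Finset.Icc 1 (phiJ n P - 1)))
    (shiftDown (phiJ n P - 1) (restrict P (Finset.Icc (phiJ n P) n)))

/-- `σ_{[j-1]} = σ_{[i-1]} ∘ (σ_{[i,j-1]} − i + 1)`. -/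
def SplitsAtRes (j i : ℕ) (P : List Block) : Prop :=
  restrict P (Finset.Icc 1 (j - 1)) =
    splitProd (i - 1) (restrict P (Finset.Icc 1 (i - 1)))
      (shiftDown (i - 1) (restrict P (Finset.Icc i (j - 1))))

instance (j : ℕ) (P : List Block) : DecidablePred fun i => SplitsAtRes j i P := fun i => by
  unfold SplitsAtRes; infer_instance

open scoped Classical in
/-- The map `ψ`. Here `j` is the smallest element of the underlying set of `R(σ)`,
`r` is the (0-based) position of the first block of `R(σ)`, and in the splitable case
`i` is the smallest element of `B_1` with `σ_{[j-1]} = σ_{[i-1]} ∘ (σ_{[i,j-1]} − i + 1)`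
and `q` is the (0-based) position of the first block contained in `[i-1]`. -/
noncomputable def psi (n : ℕ) (P : List Block) : List Block :=
  let j := ((support (Rmap P)).min).untopD 0
  if Splitable (j - 1) (restrict P (Finset.Icc 1 (j - 1))) then
    let i := (((P.headD ∅).filter fun i => 2 ≤ i ∧ SplitsAtRes j i P).min).untopD 0
    let q := P.findIdx fun B => decide (B ⊆ Finset.Icc 1 (i - 1))
    let r := P.length - (Rmap P).length
    P.take q ++ (List.zipWith (· ∪ ·) ((P.drop q).take (r - q)) (P.drop r)
      ++ ((P.drop q).take (r - q)).drop (P.drop r).length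
      ++ (P.drop r).drop (r - q))
  else
    splitProd (j - 1) (restrict P (Finset.Icc 1 (j - 1)))
      (shiftDown (j - 1) (restrict P (Finset.Icc j n)))


lemma support_nil' : support ([] : List Block) = ∅ := rfl

lemma support_cons' (B : Block) (Q : List Block) : support (B :: Q) = B ∪ support Q := rfl

lemma mem_support' {x : ℕ} {P : List Block} : x ∈ support P ↔ ∃ B ∈ P, x ∈ B := by
  induction P with
  | nil => simp [support_nil']
  | cons B Q ih => simp [support_cons', ih]

lemma support_append' (P Q : List Block) : support (P ++ Q) = support P ∪ support Q := by
  induction P with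
  | nil => simp [support_nil']
  | cons B R ih => simp [support_cons', ih, Finset.union_assoc]

lemma support_shiftUp' (m : ℕ) (Q : List Block) :
    support (shiftUp m Q) = (support Q).image (· + m) := by
  induction Q with
  | nil => simp [support_nil', shiftUp]
  | cons B R ih =>
      simp only [shiftUp, List.map_cons] at ih ⊢
      rw [support_cons', support_cons', ih, Finset.image_union]

/-- Let `σ = {B_1,…,B_k}` be a non-atomic set partition of `[n]` and
let `j` be the smallest element of the underlying set of `R(σ)`, and `B_r` the first
block of `R(σ)` (so `R(σ) = P.drop (k - |R(σ)|)` starts at position `r`). Then `j ≥ 2`,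
`σ_{[j-1]} = {B_1,…,B_{r-1}}`, and `σ_{[j,n]} = R(σ) = {B_r,…,B_k}`. -/
theorem restrict_take_drop_of_not_atomic (n : ℕ) (P : List Block)
    (hP : IsPartition n P) (hNA : ¬ Atomic n P)
    (j : ℕ) (hj1 : j ∈ support (Rmap P)) (hj2 : ∀ x ∈ support (Rmap P), j ≤ x) :
    2 ≤ j ∧
      restrict P (Finset.Icc 1 (j - 1)) = P.take (P.length - (Rmap P).length) ∧
      restrict P (Finset.Icc j n) = Rmap P ∧
      Rmap P = P.drop (P.length - (Rmap P).length)  := by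
  obtain ⟨hne, hdisj, hsupp, hchain⟩ := hP
  rw [Atomic, not_not] at hNA
  obtain ⟨a, b, σ, τ, ha, hb, hab, hσ, hτ, hPeq⟩ := hNA
  have hστ : P = σ ++ shiftUp a τ := hPeq
  have hσsupp := hσ.2.2.1
  have hτsupp := hτ.2.2.1
  have hτne : τ ≠ [] := by
    intro h
    have h1b : (1 : ℕ) ∈ Finset.Icc 1 b := Finset.mem_Icc.mpr ⟨le_rfl, hb⟩
    rw [← hτsupp, h] at h1b
    simp [support_nil'] at h1b
  have hσne : σ ≠ [] := by
    intro h
    have h1a : (1 : ℕ) ∈ Finset.Icc 1 a := Finset.mem_Icc.mpr ⟨le_rfl, ha⟩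
    rw [← hσsupp, h] at h1a
    simp [support_nil'] at h1a
  have hlenP : P.length = σ.length + τ.length := by
    rw [hστ]; simp [shiftUp]
  have hd'pos : 1 ≤ σ.length := List.length_pos_iff.mpr hσne
  have hd'lt : σ.length < P.length := by
    have := List.length_pos_iff.mpr hτne; omega
  have hupper : IsUpperSuffix P σ.length := by
    refine ⟨a + 1, ?_, ?_⟩
    · rw [hsupp, Finset.mem_Icc]; omega
    · have hdrop : P.drop σ.length = shiftUp a τ := by rw [hστ, List.drop_left]
      rw [hdrop, support_shiftUp', hτsupp, hsupp]
      ext x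
      simp only [Finset.mem_image, Finset.mem_filter, Finset.mem_Icc]
      constructor
      · rintro ⟨y, hy, rfl⟩; omega
      · rintro ⟨⟨h1, h2⟩, h3⟩; exact ⟨x - a, by omega, by omega⟩
  have hd'F : σ.length ∈ (Finset.range P.length).filter fun d => IsUpperSuffix P d := by
    rw [Finset.mem_filter, Finset.mem_range]; exact ⟨hd'lt, hupper⟩
  obtain ⟨d, hdmax⟩ := Finset.max_of_mem hd'F
  have hdF := Finset.mem_of_max hdmax
  have hd'le : σ.length ≤ d := by
    have h := Finset.le_max hd'F
    rw [hdmax] at h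
    exact_mod_cast h
  have hRmap : Rmap P = P.drop d := by rw [Rmap, hdmax]; rfl
  rw [Finset.mem_filter, Finset.mem_range] at hdF
  obtain ⟨hdlt, s, hsmem, hsupdrop⟩ := hdF
  rw [hsupp, Finset.mem_Icc] at hsmem
  have hIccs : support (P.drop d) = Finset.Icc s n := by
    rw [hsupdrop, hsupp]
    ext x
    simp only [Finset.mem_filter, Finset.mem_Icc]
    omega
  rw [hRmap, hIccs, Finset.mem_Icc] at hj1
  have hjle : j ≤ s := hj2 s (by rw [hRmap, hIccs, Finset.mem_Icc]; exact ⟨le_rfl, hsmem.2⟩)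
  have hjs : s = j := le_antisymm hj1.1 hjle
  subst hjs
  have hPsplit := List.take_append_drop d P
  have hpw : List.Pairwise Disjoint (P.take d ++ P.drop d) := by rw [hPsplit]; exact hdisj
  rw [List.pairwise_append] at hpw
  have hsep := hpw.2.2
  have hdisjsupp : ∀ x ∈ support (P.take d), x ∉ support (P.drop d) := by
    intro x hx hx'
    rw [mem_support'] at hx hx'
    obtain ⟨B, hB, hxB⟩ := hx
    obtain ⟨C, hC, hxC⟩ := hx'
    exact Finset.disjoint_left.mp (hsep B hB C hC) hxB hxC
  have hsuppunion : support (P.take d) ∪ support (P.drop d) = Finset.Icc 1 n := by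
    rw [← support_append', hPsplit, hsupp]
  have htake : support (P.take d) = Finset.Icc 1 (s - 1) := by
    ext x
    have h1 : x ∈ support (P.take d) ∪ support (P.drop d) ↔ 1 ≤ x ∧ x ≤ n := by
      rw [hsuppunion, Finset.mem_Icc]
    rw [Finset.mem_union, hIccs, Finset.mem_Icc] at h1
    have h2 := hdisjsupp x
    rw [hIccs, Finset.mem_Icc] at h2
    rw [Finset.mem_Icc]
    constructor
    · intro hx
      have h3 := h1.mp (Or.inl hx)
      have h4 := h2 hx
      omega
    · intro hx
      rcases h1.mpr (by omega) with h | h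
      · exact h
      · exfalso; omega
  have hdpos : 1 ≤ d := le_trans hd'pos hd'le
  have htakene : P.take d ≠ [] := by
    intro h
    rw [List.take_eq_nil_iff] at h
    rcases h with h | h
    · omega
    · rw [h] at hdlt; simp at hdlt
  obtain ⟨B0, hB0⟩ := List.exists_mem_of_ne_nil _ htakene
  obtain ⟨x0, hx0⟩ := hne B0 (List.mem_of_mem_take hB0)
  have hx0' : x0 ∈ Finset.Icc 1 (s - 1) := htake ▸ mem_support'.mpr ⟨B0, hB0, hx0⟩
  rw [Finset.mem_Icc] at hx0'
  have h2j : 2 ≤ s := by omega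
  have hpwmin : List.Pairwise (fun B C : Block => B.min < C.min) P := by
    have : IsTrans Block fun B C : Block => B.min < C.min := ⟨fun _ _ _ => lt_trans⟩
    exact List.isChain_iff_pairwise.mp hchain
  have hsorted : ∀ L : List Block, L.Sublist P →
      List.Pairwise (fun B C : Block => decide (blockMin B ≤ blockMin C) = true) L := by
    intro L hL
    refine (hpwmin.sublist hL).imp_of_mem ?_
    intro B C hB hC hlt
    have hBne := hne B (hL.subset hB)
    have hCne := hne C (hL.subset hC)
    obtain ⟨bm, hbm⟩ := Finset.min_of_nonempty hBne
    obtain ⟨cm, hcm⟩ := Finset.min_of_nonempty hCne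
    rw [hbm, hcm] at hlt
    simp only [blockMin, hbm, hcm, WithTop.untopD_coe, decide_eq_true_eq]
    exact le_of_lt (WithTop.coe_lt_coe.mp hlt)
  have hrestr_drop : restrict P (Finset.Icc s n) = P.drop d := by
    have hmap : ((P.map (· ∩ Finset.Icc s n)).filter fun B => decide B.Nonempty) = P.drop d := by
      conv_lhs => rw [← hPsplit]
      rw [List.map_append, List.filter_append]
      have h1 : ((P.take d).map (· ∩ Finset.Icc s n)).filter (fun B => decide B.Nonempty) = [] := by
        rw [List.filter_eq_nil_iff]
        intro B hB
        rw [List.mem_map] at hB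
        obtain ⟨C, hC, rfl⟩ := hB
        have hCsub : C ⊆ Finset.Icc 1 (s - 1) :=
          htake ▸ (fun x hx => mem_support'.mpr ⟨C, hC, hx⟩)
        have hempty : C ∩ Finset.Icc s n = ∅ := by
          ext x
          simp only [Finset.mem_inter, Finset.mem_Icc, Finset.notMem_empty, iff_false, not_and]
          intro hxC hsx
          have := Finset.mem_Icc.mp (hCsub hxC)
          omega
        simp [hempty]
      have h2 : ((P.drop d).map (· ∩ Finset.Icc s n)).filter (fun B => decide B.Nonempty)
          = P.drop d := by
        have hmapid : (P.drop d).map (· ∩ Finset.Icc s n) = P.drop d := by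
          have hcongr : (P.drop d).map (· ∩ Finset.Icc s n) = (P.drop d).map id := by
            refine List.map_congr_left ?_
            intro C hC
            exact Finset.inter_eq_left.mpr
              (fun x hx => by rw [← hIccs]; exact mem_support'.mpr ⟨C, hC, hx⟩)
          rw [hcongr, List.map_id]
        rw [hmapid, List.filter_eq_self]
        intro B hB
        simp [hne B (List.mem_of_mem_drop hB)]
      rw [h1, h2, List.nil_append]
    rw [restrict, hmap, List.mergeSort_of_pairwise (hsorted _ (List.drop_sublist _ _))]
  have hrestr_take : restrict P (Finset.Icc 1 (s - 1)) = P.take d := by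
    have hmap : ((P.map (· ∩ Finset.Icc 1 (s - 1))).filter fun B => decide B.Nonempty)
        = P.take d := by
      conv_lhs => rw [← hPsplit]
      rw [List.map_append, List.filter_append]
      have h1 : ((P.take d).map (· ∩ Finset.Icc 1 (s - 1))).filter (fun B => decide B.Nonempty)
          = P.take d := by
        have hmapid : (P.take d).map (· ∩ Finset.Icc 1 (s - 1)) = P.take d := by
          have hcongr : (P.take d).map (· ∩ Finset.Icc 1 (s - 1)) = (P.take d).map id := by
            refine List.map_congr_left ?_
            intro C hC
            exact Finset.inter_eq_left.mpr
              (fun x hx => by rw [← htake]; exact mem_support'.mpr ⟨C, hC, hx⟩)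
          rw [hcongr, List.map_id]
        rw [hmapid, List.filter_eq_self]
        intro B hB
        simp [hne B (List.mem_of_mem_take hB)]
      have h2 : ((P.drop d).map (· ∩ Finset.Icc 1 (s - 1))).filter (fun B => decide B.Nonempty)
          = [] := by
        rw [List.filter_eq_nil_iff]
        intro B hB
        rw [List.mem_map] at hB
        obtain ⟨C, hC, rfl⟩ := hB
        have hCsub : C ⊆ Finset.Icc s n :=
          hIccs ▸ (fun x hx => mem_support'.mpr ⟨C, hC, hx⟩)
        have hempty : C ∩ Finset.Icc 1 (s - 1) = ∅ := by
          ext x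
          simp only [Finset.mem_inter, Finset.mem_Icc, Finset.notMem_empty, iff_false, not_and]
          intro hxC h1x
          have := Finset.mem_Icc.mp (hCsub hxC)
          omega
        simp [hempty]
      rw [h1, h2, List.append_nil]
    rw [restrict, hmap, List.mergeSort_of_pairwise (hsorted _ (List.take_sublist _ _))]
  have hlen : P.length - (Rmap P).length = d := by
    rw [hRmap, List.length_drop]; omega
  refine ⟨h2j, ?_, ?_, ?_⟩
  · rw [hlen]; exact hrestr_take
  · rw [hRmap]; exact hrestr_drop
  · rw [hlen, hRmap]
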